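/- arXiv:1801.04214 — 9 statements merged into one kernel-verified Lean document; each statement's English description precedes it below -/
import Mathlib

section
/- Let p be an odd prime, let ρ ≥ 2 be an integer, let m ≥ 2 be a squarefree integer, and let X, Y ∈ ℤ. Then the element η = (1 + p^ρ·X) + p^ρ·Y·√m is a unit of the ring ℤ√m if and only if there exists a ∈ ℤ such that X = p^ρ·a and a·(2 + p^{2ρ}·a) = m·Y². (In particular, the norm of such a unit η is necessarily +1, never −1.) -/
/-- For an odd prime `p`, an integer `ρ ≥ 2`, a squarefree integer `m ≥ 2` and
`X, Y ∈ ℤ`, the element `η = (1 + p^ρ·X) + p^ρ·Y·√m` is a unit of `ℤ√m` if and only if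
there is `a ∈ ℤ` with `X = p^ρ·a` and `a·(2 + p^(2ρ)·a) = m·Y²`; moreover such a
unit has norm `+1`. -/
theorem unit_of_special_form_odd_p
    (p : ℕ) (hp : p.Prime) (hodd : p ≠ 2)
    (ρ : ℕ) (hρ : 2 ≤ ρ)
    (m : ℤ) (hm : 2 ≤ m) (hmsf : Squarefree m)
    (X Y : ℤ) :
    (IsUnit (⟨1 + (p : ℤ) ^ ρ * X, (p : ℤ) ^ ρ * Y⟩ : ℤ√m) ↔
      ∃ a : ℤ, X = (p : ℤ) ^ ρ * a ∧ a * (2 + (p : ℤ) ^ (2 * ρ) * a) = m * Y ^ 2) ∧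
    (IsUnit (⟨1 + (p : ℤ) ^ ρ * X, (p : ℤ) ^ ρ * Y⟩ : ℤ√m) →
      Zsqrtd.norm (⟨1 + (p : ℤ) ^ ρ * X, (p : ℤ) ^ ρ * Y⟩ : ℤ√m) = 1) := by
  set z : ℤ√m := ⟨1 + (p : ℤ) ^ ρ * X, (p : ℤ) ^ ρ * Y⟩ with hz
  set P : ℤ := (p : ℤ) ^ ρ with hP
  have hPnz : P ≠ 0 := pow_ne_zero _ (by exact_mod_cast hp.ne_zero)
  have hpz : (p : ℤ) ≠ 2 := by exact_mod_cast hodd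
  have hnorm : z.norm = 1 + P * (2 * X + P * X ^ 2 - P * m * Y ^ 2) := by
    simp [hz, Zsqrtd.norm_def]; ring
  -- norm can't be -1
  have hneg : z.norm ≠ -1 := by
    intro h
    rw [hnorm] at h
    have h2 : P ∣ 2 := ⟨-(2 * X + P * X ^ 2 - P * m * Y ^ 2), by linarith⟩
    have hpdvd : (p : ℤ) ∣ 2 := dvd_trans (dvd_pow_self _ (by omega)) h2
    have hn : p ∣ 2 := by exact_mod_cast hpdvd
    have := Nat.le_of_dvd (by norm_num) hn
    have := hp.two_le
    omega
  have hcop : IsCoprime P 2 := by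
    rw [hP, Int.isCoprime_iff_gcd_eq_one]
    have : ¬ (p : ℤ) ∣ 2 := by
      intro hpdvd
      have hn : p ∣ 2 := by exact_mod_cast hpdvd
      have := Nat.le_of_dvd (by norm_num) hn
      have := hp.two_le
      omega
    have hpp : Prime ((p : ℕ) : ℤ) := Int.prime_iff_natAbs_prime.mpr (by simpa using hp)
    rcases Int.isCoprime_iff_gcd_eq_one.mp
      ((Prime.coprime_iff_not_dvd hpp).mpr this) with h
    rw [← Int.isCoprime_iff_gcd_eq_one] at h ⊢
    exact IsCoprime.pow_left h
  have key : z.norm = 1 ↔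
      ∃ a : ℤ, X = P * a ∧ a * (2 + (p : ℤ) ^ (2 * ρ) * a) = m * Y ^ 2 := by
    constructor
    · intro h
      rw [hnorm] at h
      have h0 : 2 * X + P * X ^ 2 - P * m * Y ^ 2 = 0 := by
        have := mul_left_cancel₀ hPnz (a := P) (b := (2 * X + P * X ^ 2 - P * m * Y ^ 2))
          (c := 0) (by linarith)
        linarith
      have hdvd : P ∣ X * 2 := ⟨m * Y ^ 2 - X ^ 2, by linarith [h0]⟩
      have hdvdX : P ∣ X := hcop.dvd_of_dvd_mul_right hdvd
      obtain ⟨a, ha⟩ := hdvdX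
      refine ⟨a, ha, ?_⟩
      have h2ρ : (p : ℤ) ^ (2 * ρ) = P ^ 2 := by rw [hP, ← pow_mul, mul_comm]
      rw [h2ρ]
      subst ha
      have : P * (a * (2 + P ^ 2 * a)) = P * (m * Y ^ 2) := by ring_nf; ring_nf at h0; linarith
      exact mul_left_cancel₀ hPnz this
    · rintro ⟨a, ha, heq⟩
      rw [hnorm, ha]
      have h2ρ : (p : ℤ) ^ (2 * ρ) = P ^ 2 := by rw [hP, ← pow_mul, mul_comm]
      rw [h2ρ] at heq
      have : 2 * (P * a) + P * (P * a) ^ 2 - P * m * Y ^ 2 = P * (a * (2 + P ^ 2 * a) - m * Y ^ 2) := by ring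
      rw [this, heq]
      ring
  have hunit : IsUnit z ↔ z.norm = 1 := by
    rw [Zsqrtd.isUnit_iff_norm_isUnit, Int.isUnit_iff]
    constructor
    · rintro (h | h)
      · exact h
      · exact absurd h hneg
    · intro h
      exact Or.inl h
  exact ⟨hunit.trans key, fun h => hunit.mp h⟩
end

section
/- Let ρ ≥ 2 be an integer, let m ≥ 2 be a squarefree integer, and let X, Y ∈ ℤ. Then the element η = (1 + 2^ρ·X) + 2^ρ·Y·√m is a unit of the ring ℤ√m if and only if there exists a ∈ ℤ such that X = 2^{ρ−1}·a and a·(1 + 2^{2ρ−2}·a) = m·Y². (In particular, the norm of such a unit η is necessarily +1, never −1.) -/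
/-- For an integer `ρ ≥ 2`, a squarefree integer `m ≥ 2` and `X, Y ∈ ℤ`, the element
`η = (1 + 2^ρ·X) + 2^ρ·Y·√m` is a unit of `ℤ√m` if and only if there is `a ∈ ℤ` with
`X = 2^(ρ-1)·a` and `a·(1 + 2^(2ρ-2)·a) = m·Y²`; moreover such a unit has norm `+1`. -/
theorem unit_of_special_form_p_two
    (ρ : ℕ) (hρ : 2 ≤ ρ)
    (m : ℤ) (hm : 2 ≤ m) (hmsf : Squarefree m)
    (X Y : ℤ) :
    (IsUnit (⟨1 + 2 ^ ρ * X, 2 ^ ρ * Y⟩ : ℤ√m) ↔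
      ∃ a : ℤ, X = 2 ^ (ρ - 1) * a ∧ a * (1 + 2 ^ (2 * ρ - 2) * a) = m * Y ^ 2) ∧
    (IsUnit (⟨1 + 2 ^ ρ * X, 2 ^ ρ * Y⟩ : ℤ√m) →
      Zsqrtd.norm (⟨1 + 2 ^ ρ * X, 2 ^ ρ * Y⟩ : ℤ√m) = 1) := by
  obtain ⟨r, rfl⟩ : ∃ r, ρ = r + 2 := ⟨ρ - 2, by omega⟩
  set t : ℤ := 2 ^ r with ht
  have ht0 : 0 < t := pow_pos (by norm_num) r
  have hp1 : ((2:ℤ) ^ (r + 2) : ℤ) = 4 * t := by rw [ht]; ring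
  have hr1 : (r + 2 - 1) = r + 1 := by omega
  have hr2 : (2 * (r + 2) - 2) = 2 * r + 2 := by omega
  have hp2 : ((2:ℤ) ^ (r + 1) : ℤ) = 2 * t := by rw [ht]; ring
  have hp3 : ((2:ℤ) ^ (2 * r + 2) : ℤ) = 4 * t ^ 2 := by rw [ht]; ring
  have hnorm : Zsqrtd.norm (⟨1 + 2 ^ (r + 2) * X, 2 ^ (r + 2) * Y⟩ : ℤ√m)
      = 1 + 8 * t * X + 16 * t ^ 2 * (X ^ 2 - m * Y ^ 2) := by
    rw [Zsqrtd.norm_def]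
    simp only [hp1]
    ring
  have hunit : IsUnit (⟨1 + 2 ^ (r + 2) * X, 2 ^ (r + 2) * Y⟩ : ℤ√m) ↔
      Zsqrtd.norm (⟨1 + 2 ^ (r + 2) * X, 2 ^ (r + 2) * Y⟩ : ℤ√m) = 1 ∨
      Zsqrtd.norm (⟨1 + 2 ^ (r + 2) * X, 2 ^ (r + 2) * Y⟩ : ℤ√m) = -1 := by
    rw [Zsqrtd.isUnit_iff_norm_isUnit, Int.isUnit_iff]
  have hnotneg : Zsqrtd.norm (⟨1 + 2 ^ (r + 2) * X, 2 ^ (r + 2) * Y⟩ : ℤ√m) ≠ -1 := by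
    rw [hnorm]
    intro h
    have h8 : 8 * (t * X + 2 * t ^ 2 * (X ^ 2 - m * Y ^ 2)) = -2 := by linarith
    omega
  have hunit1 : IsUnit (⟨1 + 2 ^ (r + 2) * X, 2 ^ (r + 2) * Y⟩ : ℤ√m) ↔
      Zsqrtd.norm (⟨1 + 2 ^ (r + 2) * X, 2 ^ (r + 2) * Y⟩ : ℤ√m) = 1 := by
    rw [hunit]
    constructor
    · rintro (h | h)
      · exact h
      · exact absurd h hnotneg
    · exact Or.inl
  constructor
  · rw [hunit1, hnorm, hr1, hr2]
    constructor
    · intro h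
      have h0 : 8 * t * (X + 2 * t * (X ^ 2 - m * Y ^ 2)) = 8 * t * 0 := by linarith
      have h1 : X + 2 * t * (X ^ 2 - m * Y ^ 2) = 0 :=
        mul_left_cancel₀ (by positivity) h0
      refine ⟨m * Y ^ 2 - X ^ 2, ?_, ?_⟩
      · rw [hp2]; linarith
      · rw [hp3]
        have hX : X = 2 * t * (m * Y ^ 2 - X ^ 2) := by linarith
        linear_combination (-(X + 2 * t * (m * Y ^ 2 - X ^ 2))) * hX
    · rintro ⟨a, hXa, ha⟩
      rw [hp2] at hXa
      rw [hp3] at ha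
      subst hXa
      linear_combination 16 * t ^ 2 * ha
  · rw [hunit1]; exact id
end

section
/- Let p be an odd prime, let ρ ≥ 2 be an integer, let a ∈ ℤ with p ∤ a, and set m = a²·p^{2ρ} + 1. Let r ∈ ℤ_p be a p-adic integer with r² = m and r ≡ 1 (mod p). Then the p-adic valuation of (a·p^ρ + r)^{p−1} − 1 in ℤ_p is exactly ρ. -/
private lemma binom_aux {R : Type*} [CommRing R] (t : R) (n : ℕ) :
    ∃ k : R, (1 + t) ^ n = 1 + n * t + t ^ 2 * k := by
  induction n with
  | zero => exact ⟨0, by ring⟩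
  | succ n ih =>
    obtain ⟨k, hk⟩ := ih
    refine ⟨k + n + t * k, ?_⟩
    rw [pow_succ, hk]
    push_cast
    ring

/-- For an odd prime `p`, `ρ ≥ 2`, `a ∈ ℤ` with `p ∤ a`, `m = a²·p^(2ρ) + 1`, and a
`p`-adic square root `r` of `m` with `r ≡ 1 (mod p)`, the `p`-adic valuation of
`(a·p^ρ + r)^(p-1) - 1` is exactly `ρ`. -/
theorem valuation_of_fundamental_unit_power
    (p : ℕ) [hp : Fact p.Prime] (hodd : p ≠ 2)
    (ρ : ℕ) (hρ : 2 ≤ ρ)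
    (a : ℤ) (ha : ¬ (p : ℤ) ∣ a)
    (r : ℤ_[p])
    (hr : r ^ 2 = ((a ^ 2 * (p : ℤ) ^ (2 * ρ) + 1 : ℤ) : ℤ_[p]))
    (hr1 : (p : ℤ_[p]) ∣ (r - 1)) :
    (((a : ℤ_[p]) * (p : ℤ_[p]) ^ ρ + r) ^ (p - 1) - 1).valuation = (ρ : ℤ) := by
  have hpz : (p : ℤ_[p]) ≠ 0 := by
    exact_mod_cast Nat.cast_ne_zero.mpr hp.1.ne_zero
  -- z is a unit iff p does not divide z
  have hunit : ∀ z : ℤ_[p], ¬ (p : ℤ_[p]) ∣ z → IsUnit z := by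
    intro z hz
    rw [PadicInt.isUnit_iff]
    refine le_antisymm (PadicInt.norm_le_one z) (not_lt.mp fun h => hz ?_)
    exact (PadicInt.norm_lt_one_iff_dvd z).mp h
  -- r + 1 is a unit
  have h2 : ¬ (p : ℤ_[p]) ∣ (2 : ℤ_[p]) := by
    intro h
    have : (p : ℤ) ∣ 2 := by
      rw [← PadicInt.norm_int_lt_one_iff_dvd]
      push_cast
      exact (PadicInt.norm_lt_one_iff_dvd _).mpr h
    have hp2 : p ∣ 2 := by exact_mod_cast this
    exact hodd ((Nat.prime_dvd_prime_iff_eq hp.1 Nat.prime_two).mp hp2)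
  have hru : IsUnit (r + 1) := by
    refine hunit _ fun h => h2 ?_
    have : r + 1 - (r - 1) = 2 := by ring
    rw [← this]
    exact dvd_sub h hr1
  obtain ⟨u, hu⟩ := hru
  set v : ℤ_[p] := ↑u⁻¹ with hv
  have huv : (r + 1) * v = 1 := by
    rw [← hu, hv]; exact_mod_cast u.mul_inv
  -- (r-1)(r+1) = a^2 p^(2ρ)
  have hrm : (r - 1) * (r + 1) = (a : ℤ_[p]) ^ 2 * (p : ℤ_[p]) ^ (2 * ρ) := by
    push_cast at hr
    linear_combination hr
  have hs : r - 1 = (a : ℤ_[p]) ^ 2 * (p : ℤ_[p]) ^ (2 * ρ) * v := by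
    linear_combination v * hrm - (r - 1) * huv
  -- express ε = 1 + p^ρ * w
  set w : ℤ_[p] := (a : ℤ_[p]) + (a : ℤ_[p]) ^ 2 * (p : ℤ_[p]) ^ ρ * v with hw
  have hε : (a : ℤ_[p]) * (p : ℤ_[p]) ^ ρ + r = 1 + (p : ℤ_[p]) ^ ρ * w := by
    rw [hw, two_mul, pow_add] at *
    linear_combination hs
  -- w is a unit
  have hpa : ¬ (p : ℤ_[p]) ∣ (a : ℤ_[p]) := by
    intro h
    apply ha
    rw [← PadicInt.norm_int_lt_one_iff_dvd]
    exact (PadicInt.norm_lt_one_iff_dvd _).mpr h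
  have hwu : IsUnit w := by
    refine hunit _ fun h => hpa ?_
    have : (a : ℤ_[p]) = w - (p : ℤ_[p]) * ((a : ℤ_[p]) ^ 2 * (p : ℤ_[p]) ^ (ρ - 1) * v) := by
      rw [hw]
      have : (p : ℤ_[p]) ^ ρ = (p : ℤ_[p]) * (p : ℤ_[p]) ^ (ρ - 1) := by
        rw [← pow_succ']
        congr 1
        omega
      rw [this]; ring
    rw [this]
    exact dvd_sub h (Dvd.intro _ rfl)
  -- binomial expansion
  obtain ⟨k, hk⟩ := binom_aux ((p : ℤ_[p]) ^ ρ * w) (p - 1)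
  set c : ℤ_[p] := ((p - 1 : ℕ) : ℤ_[p]) * w + (p : ℤ_[p]) ^ ρ * w ^ 2 * k with hc
  have hfac : ((a : ℤ_[p]) * (p : ℤ_[p]) ^ ρ + r) ^ (p - 1) - 1 = (p : ℤ_[p]) ^ ρ * c := by
    rw [hε, hk, hc]
    ring
  -- norms
  have hp1 : ¬ (p : ℤ_[p]) ∣ ((p - 1 : ℕ) : ℤ_[p]) := by
    intro h
    have : (p : ℤ) ∣ ((p : ℤ) - 1) := by
      rw [← PadicInt.norm_int_lt_one_iff_dvd]
      have : (((p : ℤ) - 1 : ℤ) : ℤ_[p]) = ((p - 1 : ℕ) : ℤ_[p]) := by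
        push_cast [Nat.cast_sub hp.1.one_lt.le]
        ring
      rw [this]
      exact (PadicInt.norm_lt_one_iff_dvd _).mpr h
    have hples : 2 ≤ p := hp.1.two_le
    have h2 := Int.le_of_dvd (by push_cast; omega) this
    omega
  have hn1 : ‖((p - 1 : ℕ) : ℤ_[p]) * w‖ = 1 := by
    rw [norm_mul, PadicInt.isUnit_iff.mp (hunit _ hp1), PadicInt.isUnit_iff.mp hwu,
      one_mul]
  have hn2 : ‖(p : ℤ_[p]) ^ ρ * w ^ 2 * k‖ < 1 := by
    have h1 : ‖(p : ℤ_[p]) ^ ρ‖ < 1 := by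
      rw [PadicInt.norm_p_pow]
      apply zpow_lt_one_of_neg₀
      · exact_mod_cast hp.1.one_lt
      · simp
        omega
    calc ‖(p : ℤ_[p]) ^ ρ * w ^ 2 * k‖ = ‖(p : ℤ_[p]) ^ ρ‖ * ‖w ^ 2 * k‖ := by
          rw [mul_assoc, norm_mul]
      _ ≤ ‖(p : ℤ_[p]) ^ ρ‖ * 1 := by
          exact mul_le_mul_of_nonneg_left (PadicInt.norm_le_one _) (norm_nonneg _)
      _ < 1 := by rwa [mul_one]
  have hcnorm : ‖c‖ = 1 := by
    rw [hc, PadicInt.norm_add_eq_max_of_ne (by rw [hn1]; exact (ne_of_lt hn2).symm), hn1]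
    exact max_eq_left hn2.le
  have hc0 : c ≠ 0 := by
    intro h
    rw [h, norm_zero] at hcnorm
    norm_num at hcnorm
  have hcval : c.valuation = 0 := by
    have h := PadicInt.norm_eq_zpow_neg_valuation hc0
    rw [hcnorm] at h
    have hp1R : (1 : ℝ) < (p : ℝ) := by exact_mod_cast hp.1.one_lt
    have : (p : ℝ) ^ (-c.valuation : ℤ) = (p : ℝ) ^ (0 : ℤ) := by rw [zpow_zero]; exact h.symm
    have := zpow_right_injective₀ (by positivity) (ne_of_gt hp1R) this
    omega
  rw [hfac, PadicInt.valuation_p_pow_mul _ _ hc0, hcval, add_zero]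
end

section
/- Let ρ ≥ 2 be an integer, let a ∈ ℤ be odd, and set m = a²·2^{2ρ} + 1. Let r ∈ ℤ₂ be a 2-adic integer with r² = m and r ≡ 1 (mod 2^{ρ+2}). Then the 2-adic valuation of (a·2^ρ + r)² − 1 in ℤ₂ is exactly ρ + 1. -/
/-- For `ρ ≥ 2`, an odd integer `a`, `m = a²·2^(2ρ) + 1`, and a `2`-adic square root
`r` of `m` with `r ≡ 1 (mod 2^(ρ+2))`, the `2`-adic valuation of `(a·2^ρ + r)² - 1`
is exactly `ρ + 1`. -/
theorem valuation_of_fundamental_unit_square_two_adic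
    (ρ : ℕ) (hρ : 2 ≤ ρ)
    (a : ℤ) (ha : Odd a)
    (r : ℤ_[2])
    (hr : r ^ 2 = ((a ^ 2 * 2 ^ (2 * ρ) + 1 : ℤ) : ℤ_[2]))
    (hr1 : (2 : ℤ_[2]) ^ (ρ + 2) ∣ (r - 1)) :
    (((a : ℤ_[2]) * 2 ^ ρ + r) ^ 2 - 1).valuation = (ρ : ℤ) + 1 := by
  set u : ℤ_[2] := (a : ℤ_[2]) * r + (a : ℤ_[2]) ^ 2 * 2 ^ ρ with hu
  push_cast at hr
  have key : ((a : ℤ_[2]) * 2 ^ ρ + r) ^ 2 - 1 = (2 : ℤ_[2]) ^ (ρ + 1) * u := by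
    rw [hu]; linear_combination hr
  -- u is a unit: not divisible by 2
  have hdvd : ¬ (2 : ℤ_[2]) ∣ u := by
    intro h2
    obtain ⟨t, ht⟩ := hr1
    have hr' : r = 1 + 2 ^ (ρ + 2) * t := by linear_combination ht
    obtain ⟨k, hk⟩ : ∃ k : ℕ, ρ = k + 1 := ⟨ρ - 1, by omega⟩
    have : (2 : ℤ_[2]) ∣ (a : ℤ_[2]) := by
      obtain ⟨c, hc⟩ := h2
      refine ⟨c - ((a : ℤ_[2]) * 2 ^ (ρ + 1) * t + (a : ℤ_[2]) ^ 2 * 2 ^ k), ?_⟩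
      have : u = (a : ℤ_[2]) + 2 * ((a : ℤ_[2]) * 2 ^ (ρ + 1) * t + (a : ℤ_[2]) ^ 2 * 2 ^ k) := by
        rw [hu, hr', hk]; ring
      linear_combination hc - this
    have this2 : ((2 : ℕ) : ℤ_[2]) ^ 1 ∣ ((a : ℤ) : ℤ_[2]) := by
      simpa using this
    rw [PadicInt.pow_p_dvd_int_iff] at this2
    simp only [pow_one] at this2
    exact (Int.not_even_iff_odd.mpr ha) ((even_iff_two_dvd).mpr (by exact_mod_cast this2))
  have hu0 : u ≠ 0 := fun h => hdvd (by rw [h]; exact dvd_zero _)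
  have hnorm : ‖u‖ = 1 := by
    have h1 : ¬ ‖u‖ < 1 := fun h => hdvd ((PadicInt.norm_lt_one_iff_dvd u).mp h)
    have h2 := PadicInt.norm_le_one u
    linarith [lt_or_eq_of_le h2]
  have hval0 : u.valuation = 0 := by
    have := PadicInt.norm_eq_zpow_neg_valuation hu0
    rw [hnorm] at this
    have h2 : ((2 : ℕ) : ℝ) ^ (-(u.valuation : ℤ)) = ((2 : ℕ) : ℝ) ^ (0 : ℤ) := by
      rw [zpow_zero]; exact this.symm
    have := zpow_right_injective₀ (by norm_num : (0:ℝ) < ((2:ℕ):ℝ)) (by norm_num) h2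
    omega
  have hc : ((2 : ℕ) : ℤ_[2]) = (2 : ℤ_[2]) := by norm_num
  rw [key, ← hc, PadicInt.valuation_p_pow_mul (ρ + 1) u hu0, hval0]
  push_cast; ring
end

section
/- Let p be an odd prime and let m be an integer not divisible by p such that m is a quadratic residue modulo p (i.e. m^((p−1)/2) ≡ 1 (mod p)). Then for every unit u of the ring ℤ√m one has u^{p−1} ≡ 1 (mod p) in ℤ√m, i.e. p divides both coordinates of u^{p−1} − 1. -/
/-- If `p` is an odd prime not dividing `m` and `m` is a quadratic residue mod `p`
(in the sense `m^((p-1)/2) ≡ 1 (mod p)`), then every unit `u` of `ℤ√m` satisfies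
`u^(p-1) ≡ 1 (mod p)`, i.e. `p` divides both coordinates of `u^(p-1) - 1`. -/
theorem unit_pow_sub_one_of_residue
    (p : ℕ) (hp : p.Prime) (hodd : p ≠ 2)
    (m : ℤ) (hm : ¬ (p : ℤ) ∣ m)
    (hres : (p : ℤ) ∣ m ^ ((p - 1) / 2) - 1)
    (u : (ℤ√m)ˣ) :
    (p : ℤ) ∣ ((u : ℤ√m) ^ (p - 1) - 1).re ∧
      (p : ℤ) ∣ ((u : ℤ√m) ^ (p - 1) - 1).im := by
  haveI : Fact p.Prime := ⟨hp⟩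
  -- m is nonzero in ZMod p
  have hm0 : (m : ZMod p) ≠ 0 := by
    rwa [Ne, ZMod.intCast_zmod_eq_zero_iff_dvd]
  -- m is a square mod p by Euler's criterion
  have hpow : (m : ZMod p) ^ (p / 2) = 1 := by
    have h2 : p / 2 = (p - 1) / 2 := by
      obtain ⟨k, hk⟩ := hp.odd_of_ne_two hodd
      omega
    have := (ZMod.intCast_zmod_eq_zero_iff_dvd _ p).mpr hres
    push_cast at this
    have := sub_eq_zero.mp this
    rw [h2]
    exact_mod_cast this
  obtain ⟨r, hr⟩ := (ZMod.euler_criterion p hm0).mpr hpow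
  have hr' : r ≠ 0 := by
    rintro rfl
    exact hm0 (by rw [hr]; ring)
  -- the two ring homs ℤ√m → ZMod p
  have hrr : r * r = (m : ZMod p) := hr.symm
  have hrr' : (-r) * (-r) = (m : ZMod p) := by rw [← hrr]; ring
  set φ : ℤ√m →+* ZMod p := Zsqrtd.lift ⟨r, hrr⟩ with hφ
  set ψ : ℤ√m →+* ZMod p := Zsqrtd.lift ⟨-r, hrr'⟩ with hψ
  have key : ∀ (f : ℤ√m →+* ZMod p), f ((u : ℤ√m) ^ (p - 1) - 1) = 0 := by
    intro f
    have hu : IsUnit (f (u : ℤ√m)) := (u.map f.toMonoidHom).isUnit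
    have hu0 : f (u : ℤ√m) ≠ 0 := hu.ne_zero
    rw [map_sub, map_pow, map_one, ZMod.pow_card_sub_one_eq_one hu0, sub_self]
  have hφ0 := key φ
  have hψ0 := key ψ
  set x := (u : ℤ√m) ^ (p - 1) - 1 with hx
  have hφx : (x.re : ZMod p) + (x.im : ZMod p) * r = 0 := by
    simpa [φ, Zsqrtd.lift] using hφ0
  have hψx : (x.re : ZMod p) + (x.im : ZMod p) * (-r) = 0 := by
    simpa [ψ, Zsqrtd.lift] using hψ0
  have h2ne : (2 : ZMod p) ≠ 0 := by
    have : ((2 : ℕ) : ZMod p) ≠ 0 := by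
      rw [Ne, ZMod.natCast_eq_zero_iff]
      exact fun h => hodd ((Nat.prime_dvd_prime_iff_eq hp Nat.prime_two).mp h)
    simpa using this
  have hre : (x.re : ZMod p) = 0 := by
    have : (2 : ZMod p) * (x.re : ZMod p) = 0 := by linear_combination hφx + hψx
    rcases mul_eq_zero.mp this with h | h
    · exact absurd h h2ne
    · exact h
  have him : (x.im : ZMod p) = 0 := by
    have : (2 : ZMod p) * r * (x.im : ZMod p) = 0 := by linear_combination hφx - hψx
    rcases mul_eq_zero.mp this with h | h
    · rcases mul_eq_zero.mp h with h | h
      · exact absurd h h2ne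
      · exact absurd h hr'
    · exact h
  exact ⟨(ZMod.intCast_zmod_eq_zero_iff_dvd _ p).mp hre,
    (ZMod.intCast_zmod_eq_zero_iff_dvd _ p).mp him⟩
end

section
/- Let p be an odd prime and let m be an integer not divisible by p such that m is a quadratic non-residue modulo p (i.e. m^((p−1)/2) ≡ −1 (mod p)). Then for every unit u of the ring ℤ√m one has u^{p+1} ≡ N(u) (mod p) in ℤ√m, where N(u) ∈ {1, −1} is the norm of u; i.e. p divides both coordinates of u^{p+1} − N(u). -/
set_option maxHeartbeats 2000000

theorem zsqrtd_dvd_pow_sub (p : ℕ) (hp : p.Prime) (hodd : p ≠ 2)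
    (m : ℤ) (hres : (p : ℤ) ∣ m ^ ((p - 1) / 2) + 1)
    (z : ℤ√m) :
    ((p : ℤ) : ℤ√m) ∣ z ^ (p + 1) - ((Zsqrtd.norm z : ℤ) : ℤ√m) := by
  haveI : Fact p.Prime := ⟨hp⟩
  let I : Ideal (ℤ√m) := Ideal.span {((p : ℤ) : ℤ√m)}
  let φ : ℤ√m →+* (ℤ√m) ⧸ I := Ideal.Quotient.mk I
  have hmem : ∀ x : ℤ√m, φ x = 0 ↔ ((p : ℤ) : ℤ√m) ∣ x := by
    intro x
    rw [Ideal.Quotient.eq_zero_iff_mem, Ideal.mem_span_singleton]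
  have hp0 : ((p : ℕ) : (ℤ√m) ⧸ I) = 0 := by
    have : φ (((p : ℤ)) : ℤ√m) = 0 := (hmem _).2 dvd_rfl
    rw [map_intCast] at this
    exact_mod_cast this
  haveI : CharP ((ℤ√m) ⧸ I) p := by
    constructor
    intro n
    constructor
    · intro h
      have : ((p : ℤ) : ℤ√m) ∣ ((n : ℤ) : ℤ√m) := by
        rw [← hmem, map_intCast]
        exact_mod_cast h
      rw [Zsqrtd.intCast_dvd_intCast] at this
      exact_mod_cast this
    · rintro ⟨k, rfl⟩
      push_cast
      simp [hp0]
  haveI : ExpChar ((ℤ√m) ⧸ I) p := ExpChar.prime hp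
  have hfermat : ∀ a : ℤ, ((a : (ℤ√m) ⧸ I)) ^ p = (a : (ℤ√m) ⧸ I) := by
    intro a
    have h1 : (p : ℤ) ∣ a ^ p - a := by
      have := ZMod.pow_card (a : ZMod p)
      have h2 : ((a ^ p - a : ℤ) : ZMod p) = 0 := by push_cast [this]; ring
      exact_mod_cast (ZMod.intCast_zmod_eq_zero_iff_dvd _ p).1 h2
    have h3 : ((a ^ p - a : ℤ) : (ℤ√m) ⧸ I) = 0 := by
      obtain ⟨k, hk⟩ := h1
      rw [hk]
      push_cast
      simp [hp0]
    push_cast at h3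
    exact sub_eq_zero.mp h3
  obtain ⟨k, hk⟩ := hp.odd_of_ne_two hodd
  have hk2 : (p - 1) / 2 = k := by omega
  set s : (ℤ√m) ⧸ I := φ Zsqrtd.sqrtd with hs
  have hs2 : s * s = ((m : ℤ) : (ℤ√m) ⧸ I) := by
    rw [hs, ← map_mul, Zsqrtd.dmuld, map_intCast]
  have hmk : ((m : ℤ) : (ℤ√m) ⧸ I) ^ k = -1 := by
    rw [hk2] at hres
    obtain ⟨c, hc⟩ := hres
    have : ((m ^ k + 1 : ℤ) : (ℤ√m) ⧸ I) = 0 := by rw [hc]; push_cast; simp [hp0]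
    push_cast at this
    linear_combination this
  have hsp : s ^ p = -s := by
    rw [hk]
    rw [pow_succ, pow_mul, show s ^ 2 = ((m:ℤ): (ℤ√m) ⧸ I) by rw [sq]; exact hs2]
    rw [hmk]
    ring
  have hdecomp : ∀ w : ℤ√m,
      φ w = ((w.re : ℤ) : (ℤ√m) ⧸ I) + s * ((w.im : ℤ) : (ℤ√m) ⧸ I) := by
    intro w
    have h : w = ((w.re : ℤ) : ℤ√m) + Zsqrtd.sqrtd * ((w.im : ℤ) : ℤ√m) := by
      ext <;>
        simp only [Zsqrtd.re_add, Zsqrtd.im_add, Zsqrtd.re_mul, Zsqrtd.im_mul,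
          Zsqrtd.re_sqrtd, Zsqrtd.im_sqrtd, Zsqrtd.re_intCast, Zsqrtd.im_intCast] <;>
        ring
    rw [show φ w = φ (((w.re : ℤ) : ℤ√m) + Zsqrtd.sqrtd * ((w.im : ℤ) : ℤ√m)) from by
      rw [← h]]
    rw [map_add, map_mul, map_intCast, map_intCast]
  have hfrob : φ z ^ p = φ (star z) := by
    rw [hdecomp z, hdecomp (star z), Zsqrtd.re_star, Zsqrtd.im_star,
      add_pow_char, mul_pow, hfermat, hsp, hfermat]
    push_cast
    ring
  have key : φ (z ^ (p + 1) - ((Zsqrtd.norm z : ℤ) : ℤ√m)) = 0 := by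
    rw [map_sub, map_pow, pow_succ, hfrob,
      show ((Zsqrtd.norm z : ℤ) : ℤ√m) = z * star z from Zsqrtd.norm_eq_mul_conj z,
      map_mul, ← map_mul]
    rw [show star z * z = z * star z from mul_comm _ _, map_mul]
    ring
  exact (hmem _).1 key

/-- If `p` is an odd prime not dividing `m` and `m` is a quadratic non-residue mod `p`
(in the sense `m^((p-1)/2) ≡ -1 (mod p)`), then every unit `u` of `ℤ√m` satisfies
`u^(p+1) ≡ N(u) (mod p)`, i.e. `p` divides both coordinates of `u^(p+1) - N(u)`. -/
theorem unit_pow_add_one_of_nonresidue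
    (p : ℕ) (hp : p.Prime) (hodd : p ≠ 2)
    (m : ℤ) (hm : ¬ (p : ℤ) ∣ m)
    (hres : (p : ℤ) ∣ m ^ ((p - 1) / 2) + 1)
    (u : (ℤ√m)ˣ) :
    (p : ℤ) ∣ ((u : ℤ√m) ^ (p + 1) - ((Zsqrtd.norm (u : ℤ√m) : ℤ) : ℤ√m)).re ∧
      (p : ℤ) ∣ ((u : ℤ√m) ^ (p + 1) - ((Zsqrtd.norm (u : ℤ√m) : ℤ) : ℤ√m)).im := by
  rw [← Zsqrtd.intCast_dvd]
  exact zsqrtd_dvd_pow_sub p hp hodd m hres _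
end

section
/- Let m ≥ 2 be a squarefree integer, let p ≥ 5 be a prime dividing m (so p ramifies in ℚ(√m)), and let u be a unit of the ring ℤ√m with u ≠ 1 and u ≠ −1. Then the norm N(u^{p−1} − 1) is a nonzero integer and its p-adic valuation v_p(N(u^{p−1} − 1)) is odd, i.e. equals 1 + 2δ for some integer δ ≥ 0. -/
/-- If `m ≥ 2` is squarefree, `p ≥ 5` is a prime dividing `m`, and `u` is a unit of
`ℤ√m` with `u ≠ ±1`, then `N(u^(p-1) - 1)` is nonzero and its `p`-adic valuation is
odd, of the form `1 + 2δ`. -/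
theorem padicValInt_norm_odd_of_ramified
    (m : ℤ) (hm : 2 ≤ m) (hmsf : Squarefree m)
    (p : ℕ) (hp : p.Prime) (hp5 : 5 ≤ p) (hpm : (p : ℤ) ∣ m)
    (u : (ℤ√m)ˣ) (hu1 : (u : ℤ√m) ≠ 1) (hu2 : (u : ℤ√m) ≠ -1) :
    Zsqrtd.norm ((u : ℤ√m) ^ (p - 1) - 1) ≠ 0 ∧
      ∃ δ : ℕ, padicValInt p (Zsqrtd.norm ((u : ℤ√m) ^ (p - 1) - 1)) = 1 + 2 * δ := by
  haveI : Fact p.Prime := ⟨hp⟩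
  have hm0 : (0:ℤ) < m := by linarith
  have hmne : m ≠ 0 := by linarith
  set v : ℤ√m := (u : ℤ√m) ^ (p - 1) with hv
  set x : ℤ := v.re with hxdef
  set y : ℤ := v.im with hydef
  have hpodd : Odd p := hp.odd_of_ne_two (by omega)
  have hpe : Even (p - 1) := Nat.Odd.sub_odd hpodd odd_one
  -- norm of v is 1
  have hnu : (Zsqrtd.norm (u : ℤ√m)).natAbs = 1 := Zsqrtd.norm_eq_one_iff.mpr u.isUnit
  have hnv : Zsqrtd.norm v = 1 := by
    rw [hv, show Zsqrtd.norm ((u : ℤ√m) ^ (p-1)) = (Zsqrtd.norm (u:ℤ√m)) ^ (p-1) from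
      map_pow (Zsqrtd.normMonoidHom) _ _]
    rcases Int.isUnit_iff.mp (Int.isUnit_iff_natAbs_eq.mpr hnu) with h | h
    · rw [h, one_pow]
    · rw [h, hpe.neg_one_pow]
  have hx : x * x - m * y * y = 1 := by
    rw [hxdef, hydef, ← Zsqrtd.norm_def, hnv]
  -- real embedding
  have hmns : ∀ n : ℤ, m ≠ n * n := by
    intro n hn
    have h1 : IsUnit n := hmsf n (by rw [hn])
    have := Int.isUnit_iff.mp h1
    rcases this with h | h <;> rw [h] at hn <;> norm_num at hn <;> omega
  have hsq : (Real.sqrt m) * Real.sqrt m = ((m : ℤ) : ℝ) := by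
    rw [Real.mul_self_sqrt (by positivity)]
  set f : ℤ√m →+* ℝ := Zsqrtd.lift ⟨Real.sqrt m, hsq⟩ with hf
  have hfinj : Function.Injective f := Zsqrtd.lift_injective _ hmns
  obtain ⟨k, hk⟩ := hpe
  have hkne : k ≠ 0 := by omega
  -- y ≠ 0
  have hy0 : y ≠ 0 := by
    intro hy
    have hx2 : x * x = 1 := by rw [hy] at hx; linarith
    have hxu : x = 1 ∨ x = -1 := Int.isUnit_iff.mp (IsUnit.of_mul_eq_one (a := x) x hx2)
    have hveq : v = 1 ∨ v = -1 := by
      rcases hxu with h | h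
      · left; ext <;> simp [← hxdef, ← hydef, h, hy]
      · right; ext <;> simp [← hxdef, ← hydef, h, hy]
    set t : ℝ := f (u : ℤ√m) with ht
    have hfv : f v = t ^ (p - 1) := by rw [hv, map_pow]
    rcases hveq with h | h
    · have ht1 : t ^ (p - 1) = 1 := by rw [← hfv, h, map_one]
      have h2k : (t ^ 2) ^ k = 1 := by
        rw [← pow_mul, two_mul, ← hk]; exact ht1
      have ht2 : t ^ 2 = 1 := by
        rcases lt_trichotomy (t ^ 2) 1 with h' | h' | h'
        · exact absurd h2k (by have := pow_lt_one₀ (sq_nonneg t) h' hkne; linarith)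
        · exact h'
        · exact absurd h2k (by have := one_lt_pow₀ h' hkne; linarith)
      have : (t - 1) * (t + 1) = 0 := by linear_combination ht2
      rcases mul_eq_zero.mp this with h' | h'
      · exact hu1 (hfinj (by rw [map_one, ← ht]; linarith))
      · refine hu2 (hfinj ?_)
        rw [map_neg, map_one, ← ht]; linarith
    · have ht1 : t ^ (p - 1) = -1 := by rw [← hfv, h, map_neg, map_one]
      have : (t ^ k) ^ 2 = -1 := by
        rw [← pow_mul, mul_comm, two_mul, ← hk]; exact ht1
      nlinarith [sq_nonneg (t ^ k)]
  -- mod p: x ≡ 1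
  have hzero : ((m : ℤ) : ZMod p) = 0 := (ZMod.intCast_zmod_eq_zero_iff_dvd m p).mpr hpm
  set φ : ℤ√m →+* ZMod p := Zsqrtd.lift ⟨0, by rw [mul_zero, hzero]⟩ with hφ
  have hφu : φ (u : ℤ√m) ≠ 0 := (u.isUnit.map φ).ne_zero
  have hφv : φ v = (x : ZMod p) := by
    rw [hφ, Zsqrtd.lift_apply_apply]
    simp [← hxdef]
  have hxp : ((x - 1 : ℤ) : ZMod p) = 0 := by
    have h1 : φ v = 1 := by
      rw [hv, map_pow, ZMod.pow_card_sub_one_eq_one hφu]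
    rw [hφv] at h1
    push_cast
    rw [h1]; ring
  have hpx1 : (p : ℤ) ∣ x - 1 := (ZMod.intCast_zmod_eq_zero_iff_dvd _ p).mp hxp
  -- x ≠ ±1
  have hx1 : x - 1 ≠ 0 := by
    intro h
    have : m * (y * y) = 0 := by nlinarith
    exact hy0 (by rcases mul_eq_zero.mp this with h' | h' <;>
      [exact absurd h' hmne; exact (mul_self_eq_zero.mp h')])
  have hxp1 : x + 1 ≠ 0 := by
    intro h
    have : m * (y * y) = 0 := by nlinarith
    exact hy0 (by rcases mul_eq_zero.mp this with h' | h' <;>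
      [exact absurd h' hmne; exact (mul_self_eq_zero.mp h')])
  have hfac : (x - 1) * (x + 1) = m * (y * y) := by linear_combination hx
  have hp2 : ¬ (p : ℤ) ∣ x + 1 := by
    intro h
    have h2 : (p : ℤ) ∣ 2 := by
      have := dvd_sub h hpx1
      simpa using this
    have := Int.le_of_dvd (by norm_num) h2
    omega
  -- valuation of m is 1
  have hvm : padicValInt p m = 1 := by
    have h1 : 1 ≤ padicValInt p m := by
      rcases (padicValInt_dvd_iff 1 m).mp (by simpa using hpm) with h | h
      · exact absurd h hmne
      · exact h
    have h2 : padicValInt p m < 2 := by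
      by_contra h
      push_neg at h
      have hd : (p : ℤ) ^ 2 ∣ m := (padicValInt_dvd_iff 2 m).mpr (Or.inr h)
      have : IsUnit (p : ℤ) := hmsf p (by rwa [sq] at hd)
      rcases Int.isUnit_iff.mp this with h' | h' <;> omega
    omega
  have hz : padicValInt p (x + 1) = 0 := padicValInt.eq_zero_of_not_dvd hp2
  have heq : padicValInt p (x - 1) + padicValInt p (x + 1) =
      padicValInt p m + (padicValInt p y + padicValInt p y) := by
    rw [← padicValInt.mul hx1 hxp1, ← padicValInt.mul hy0 hy0,
      ← padicValInt.mul hmne (mul_ne_zero hy0 hy0), hfac]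
  -- norm computation
  have hre : (v - 1).re = x - 1 := by simp [← hxdef]
  have him : (v - 1).im = y := by simp [← hydef]
  have hN : Zsqrtd.norm (v - 1) = (-2) * (x - 1) := by
    rw [Zsqrtd.norm_def, hre, him]
    linear_combination hx
  refine ⟨by rw [hN]; exact mul_ne_zero (by norm_num) hx1, padicValInt p y, ?_⟩
  have hnd2 : ¬ (p : ℤ) ∣ (-2) := by
    intro h
    have := Int.le_of_dvd (by norm_num) (dvd_neg.mp h)
    omega
  rw [hN, padicValInt.mul (by norm_num) hx1, padicValInt.eq_zero_of_not_dvd hnd2]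
  omega
end

section
/- Let m ≥ 2 be a squarefree integer divisible by 3, and let u be a unit of the ring ℤ√m with u ≠ 1 and u ≠ −1. Then the norm N(u^6 − 1) is a nonzero integer and: if m ≢ 6 (mod 9) then v_3(N(u^6 − 1)) = 3 + 2δ for some integer δ ≥ 0, while if m ≡ 6 (mod 9) then v_3(N(u^6 − 1)) = 5 + 2δ for some integer δ ≥ 0. -/
private lemma zmod3_sq_ne_neg_one : ∀ x : ZMod 3, x * x ≠ -1 := by decide

private lemma zmod3_aux : ∀ x : ZMod 3, x * x = 1 → 4 * x ^ 2 - 1 = 0 := by decide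

private lemma zmod9_aux : ∀ x y : ZMod 9, x * x - 6 * (y * y) = 1 →
    (ZMod.castHom (by norm_num : (3 : ℕ) ∣ 9) (ZMod 3)) y ≠ 0 →
    4 * x ^ 2 - 1 = 0 := by decide


/-- If `m ≥ 2` is squarefree with `3 ∣ m` and `u` is a unit of `ℤ√m` with `u ≠ ±1`,
then `N(u^6 - 1)` is nonzero, and its `3`-adic valuation equals `3 + 2δ` when
`m ≢ 6 (mod 9)`, and `5 + 2δ` when `m ≡ 6 (mod 9)`. -/
theorem padicValInt_norm_of_three_ramified
    (m : ℤ) (hm : 2 ≤ m) (hmsf : Squarefree m) (h3m : (3 : ℤ) ∣ m)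
    (u : (ℤ√m)ˣ) (hu1 : (u : ℤ√m) ≠ 1) (hu2 : (u : ℤ√m) ≠ -1) :
    Zsqrtd.norm ((u : ℤ√m) ^ 6 - 1) ≠ 0 ∧
      (¬ m ≡ 6 [ZMOD 9] →
        ∃ δ : ℕ, padicValInt 3 (Zsqrtd.norm ((u : ℤ√m) ^ 6 - 1)) = 3 + 2 * δ) ∧
      (m ≡ 6 [ZMOD 9] →
        ∃ δ : ℕ, padicValInt 3 (Zsqrtd.norm ((u : ℤ√m) ^ 6 - 1)) = 5 + 2 * δ) := by
  haveI : Fact (Nat.Prime 3) := ⟨by norm_num⟩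
  set z : ℤ√m := (u : ℤ√m) with hz
  set a : ℤ := z.re with ha
  set b : ℤ := z.im with hb
  have h3mn : ((3 : ℕ) : ℤ) ∣ m := by exact_mod_cast h3m
  have h3 : (m : ZMod 3) = 0 := (ZMod.intCast_zmod_eq_zero_iff_dvd m 3).mpr h3mn
  have hnorm : z.norm = 1 ∨ z.norm = -1 :=
    Int.isUnit_iff.mp ((Zsqrtd.isUnit_iff_norm_isUnit z).mp u.isUnit)
  have hN : a * a - m * (b * b) = 1 := by
    rcases hnorm with h | h
    · rw [Zsqrtd.norm_def] at h; linear_combination h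
    · exfalso
      rw [Zsqrtd.norm_def] at h
      have h' : ((a : ZMod 3)) * a = -1 := by
        have hc := congrArg (fun t : ℤ => (t : ZMod 3)) h
        push_cast at hc
        rw [h3] at hc
        linear_combination hc
      exact zmod3_sq_ne_neg_one _ h'
  have hbne : b ≠ 0 := by
    intro hb0
    rw [hb0] at hN
    have h1 : a * a = 1 := by linear_combination hN
    rcases Int.eq_one_or_neg_one_of_mul_eq_one' h1 with ⟨h, _⟩ | ⟨h, _⟩
    · exact hu1 (Zsqrtd.ext_iff.mpr ⟨by simpa using h, by simpa using hb0⟩)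
    · exact hu2 (Zsqrtd.ext_iff.mpr ⟨by simpa using h, by simpa using hb0⟩)
  have hbb : 1 ≤ b * b := by
    have h1 := Int.one_le_abs hbne
    nlinarith [abs_mul_abs_self b, abs_nonneg b]
  have hFpos : (0 : ℤ) < 4 * a ^ 2 - 1 := by nlinarith
  have hFne : (4 * a ^ 2 - 1 : ℤ) ≠ 0 := ne_of_gt hFpos
  -- the key algebraic identity
  have key : Zsqrtd.norm (z ^ 6 - 1) = -4 * m * b ^ 2 * (4 * a ^ 2 - 1) ^ 2 := by
    have h6 : z ^ 6 = z * z * z * z * z * z := by ring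
    rw [Zsqrtd.norm_def, h6]
    simp only [Zsqrtd.re_sub, Zsqrtd.im_sub, Zsqrtd.re_mul, Zsqrtd.im_mul,
      Zsqrtd.re_one, Zsqrtd.im_one]
    linear_combination (-1 - 3*b^2*m + 3*b^4*m^2 - b^6*m^3 + b^8*m^4 - b^10*m^5
      - a^2 + 30*a^2*b^2*m + 3*a^2*b^4*m^2 - 4*a^2*b^6*m^3 + 5*a^2*b^8*m^4
      - a^4 - 3*a^4*b^2*m + 6*a^4*b^4*m^2 - 10*a^4*b^6*m^3
      + a^6 - 4*a^6*b^2*m + 10*a^6*b^4*m^2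
      + a^8 - 5*a^8*b^2*m + a^10) * hN
  obtain ⟨m', hm'⟩ := h3m
  have hm'ne : m' ≠ 0 := by rintro rfl; rw [mul_zero] at hm'; omega
  have h3m'nd : ¬(3 : ℤ) ∣ m' := by
    rintro ⟨k, hk⟩
    have h9 : (3 : ℤ) * 3 ∣ m := ⟨k, by rw [hm', hk]; ring⟩
    have := hmsf 3 h9
    rw [Int.isUnit_iff] at this
    omega
  have h4m'nd : ¬(3 : ℤ) ∣ 4 * m' := by
    intro h
    rcases Int.prime_three.2.2 4 m' h with h | h
    · norm_num at h
    · exact h3m'nd h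
  -- 3 divides 4a²-1
  have hamod : ((a : ZMod 3)) * a = 1 := by
    have hc := congrArg (fun t : ℤ => (t : ZMod 3)) hN
    push_cast at hc
    rw [h3] at hc
    linear_combination hc
  have h3F : (3 : ℤ) ∣ 4 * a ^ 2 - 1 := by
    have := zmod3_aux _ hamod
    have hc : ((4 * a ^ 2 - 1 : ℤ) : ZMod 3) = 0 := by push_cast; linear_combination this
    exact_mod_cast (ZMod.intCast_zmod_eq_zero_iff_dvd _ 3).mp hc
  -- nonzeroness of the factors
  have h4m'ne : (4 * m' : ℤ) ≠ 0 := by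
    intro h; rcases mul_eq_zero.mp h with h | h
    · norm_num at h
    · exact hm'ne h
  have h3ne : (3 : ℤ) ≠ 0 := by norm_num
  have hbbne : b * b ≠ 0 := mul_ne_zero hbne hbne
  have hFFne : (4 * a ^ 2 - 1) * (4 * a ^ 2 - 1) ≠ 0 := mul_ne_zero hFne hFne
  have hbFne : (b * b) * ((4 * a ^ 2 - 1) * (4 * a ^ 2 - 1)) ≠ 0 := mul_ne_zero hbbne hFFne
  have h3bFne : (3 : ℤ) * ((b * b) * ((4 * a ^ 2 - 1) * (4 * a ^ 2 - 1))) ≠ 0 :=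
    mul_ne_zero h3ne hbFne
  have key2 : Zsqrtd.norm (z ^ 6 - 1) =
      -((4 * m') * ((3 : ℤ) * ((b * b) * ((4 * a ^ 2 - 1) * (4 * a ^ 2 - 1))))) := by
    rw [key, hm']; ring
  have hNne : Zsqrtd.norm (z ^ 6 - 1) ≠ 0 := by
    rw [key2]
    exact neg_ne_zero.mpr (mul_ne_zero h4m'ne h3bFne)
  have hneg : ∀ x : ℤ, padicValInt 3 (-x) = padicValInt 3 x := by
    intro x; simp only [padicValInt, Int.natAbs_neg]
  have h3v : padicValInt 3 (3 : ℤ) = 1 := by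
    simpa using padicValInt_self (p := 3)
  set vb := padicValInt 3 b with hvb
  set vF := padicValInt 3 (4 * a ^ 2 - 1) with hvF
  have hval : padicValInt 3 (Zsqrtd.norm (z ^ 6 - 1)) = 1 + (vb + vb + (vF + vF)) := by
    rw [key2, hneg, padicValInt.mul h4m'ne h3bFne, padicValInt.mul h3ne hbFne,
      padicValInt.mul hbbne hFFne, padicValInt.mul hbne hbne, padicValInt.mul hFne hFne,
      padicValInt.eq_zero_of_not_dvd (by exact_mod_cast h4m'nd), h3v]
    omega
  have hvF1 : 1 ≤ vF := by
    rcases (padicValInt_dvd_iff (p := 3) 1 (4 * a ^ 2 - 1)).mp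
      (by simpa using h3F) with h | h
    · exact absurd h hFne
    · exact h
  refine ⟨hNne, fun _ => ⟨vb + vF - 1, by omega⟩, fun hm9 => ?_⟩
  -- case m ≡ 6 (mod 9)
  have hm9' : (m : ZMod 9) = 6 := by
    have := (ZMod.intCast_eq_intCast_iff m 6 9).mpr hm9
    rw [this]; norm_num
  by_cases hdb : (3 : ℤ) ∣ b
  · have hvb1 : 1 ≤ vb := by
      rcases (padicValInt_dvd_iff (p := 3) 1 b).mp (by simpa using hdb) with h | h
      · exact absurd h hbne
      · exact h
    exact ⟨vb + vF - 2, by omega⟩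
  · have hbz3 : (b : ZMod 3) ≠ 0 := fun h =>
      hdb (by exact_mod_cast (ZMod.intCast_zmod_eq_zero_iff_dvd b 3).mp h)
    have hc9 : ((a : ZMod 9)) * a - 6 * (b * b) = 1 := by
      have hc := congrArg (fun t : ℤ => (t : ZMod 9)) hN
      push_cast at hc
      rw [hm9'] at hc
      linear_combination hc
    have h9F : (9 : ℤ) ∣ 4 * a ^ 2 - 1 := by
      have hy : (ZMod.castHom (by norm_num : (3 : ℕ) ∣ 9) (ZMod 3)) ((b : ℤ) : ZMod 9) ≠ 0 := by
        rw [map_intCast]; exact hbz3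
      have := zmod9_aux _ _ hc9 hy
      have hc : ((4 * a ^ 2 - 1 : ℤ) : ZMod 9) = 0 := by push_cast; linear_combination this
      exact_mod_cast (ZMod.intCast_zmod_eq_zero_iff_dvd _ 9).mp hc
    have hvF2 : 2 ≤ vF := by
      rcases (padicValInt_dvd_iff (p := 3) 2 (4 * a ^ 2 - 1)).mp
        (by norm_num; exact h9F) with h | h
      · exact absurd h hFne
      · exact h
    exact ⟨vb + vF - 2, by omega⟩
end

section
/- Let m ≥ 2 be a squarefree integer with m ≡ 2, 3, 6 or 7 (mod 8) (so 2 ramifies in ℚ(√m)), and let u be a unit of the ring ℤ√m with u ≠ 1 and u ≠ −1. Then the norm N(u^4 − 1) is a nonzero integer and v_2(N(u^4 − 1)) = 4 + δ₀ + 2δ for some integer δ ≥ 0, where δ₀ = 1, 2, 3, 4 according as m ≡ 2, 3, 6, 7 (mod 8). -/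
private lemma sq8 (a : ℤ) :
    ((4:ℤ) ∣ a ∧ a*a % 8 = 0) ∨ (a % 2 = 0 ∧ ¬ (4:ℤ) ∣ a ∧ a*a % 8 = 4) ∨
    (a % 2 = 1 ∧ a*a % 8 = 1) := by
  have key : a*a % 8 = (a % 4) * (a % 4) % 8 := by
    conv_lhs => rw [show a = 4*(a/4) + a%4 from (Int.mul_ediv_add_emod a 4).symm]
    rw [show (4*(a/4) + a%4) * (4*(a/4) + a%4)
        = (a%4)*(a%4) + 8*(2*(a/4)*(a/4) + (a/4)*(a%4)) by ring,
      Int.add_mul_emod_self_left]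
  have h4 : a % 4 = 0 ∨ a % 4 = 1 ∨ a % 4 = 2 ∨ a % 4 = 3 := by omega
  rcases h4 with h|h|h|h <;> rw [h] at key <;> norm_num at key <;> omega

private lemma pv16 : padicValInt 2 (-16 : ℤ) = 4 := by
  simp only [padicValInt]
  norm_num
  rw [show (16:ℕ) = 2^4 by norm_num, padicValNat.prime_pow]

private lemma pv_ge_of_dvd {a : ℤ} (ha : a ≠ 0) {n : ℕ} (h : (2:ℤ)^n ∣ a) :
    n ≤ padicValInt 2 a := by
  have := (padicValInt_dvd_iff (p := 2) n a).mp (by exact_mod_cast h)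
  tauto

private lemma pv_lt_of_not_dvd {a : ℤ} {n : ℕ} (h : ¬ (2:ℤ)^n ∣ a) :
    padicValInt 2 a < n := by
  by_contra hc
  exact h (by exact_mod_cast (padicValInt_dvd_iff (p := 2) n a).mpr (Or.inr (by omega)))

/-- If `m ≥ 2` is squarefree with `m ≡ 2, 3, 6, 7 (mod 8)` (so `2` ramifies) and `u`
is a unit of `ℤ√m` with `u ≠ ±1`, then `N(u^4 - 1)` is nonzero and its `2`-adic
valuation equals `4 + δ₀ + 2δ` with `δ₀ = 1, 2, 3, 4` according as
`m ≡ 2, 3, 6, 7 (mod 8)`. -/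
theorem padicValInt_norm_of_two_ramified
    (m : ℤ) (hm : 2 ≤ m) (hmsf : Squarefree m)
    (hm8 : m % 8 = 2 ∨ m % 8 = 3 ∨ m % 8 = 6 ∨ m % 8 = 7)
    (u : (ℤ√m)ˣ) (hu1 : (u : ℤ√m) ≠ 1) (hu2 : (u : ℤ√m) ≠ -1) :
    Zsqrtd.norm ((u : ℤ√m) ^ 4 - 1) ≠ 0 ∧
      ∃ δ : ℕ, padicValInt 2 (Zsqrtd.norm ((u : ℤ√m) ^ 4 - 1)) =
        4 + (if m % 8 = 2 then 1 else if m % 8 = 3 then 2 else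
             if m % 8 = 6 then 3 else 4) + 2 * δ := by
  set a := (u : ℤ√m).re with ha_def
  set b := (u : ℤ√m).im with hb_def
  -- the norm of u is ±1
  have hunit : IsUnit (Zsqrtd.norm (u : ℤ√m)) :=
    (Zsqrtd.isUnit_iff_norm_isUnit _).mp u.isUnit
  have hE : a*a - m*(b*b) = 1 ∨ a*a - m*(b*b) = -1 := by
    rcases Int.isUnit_iff.mp hunit with h | h <;>
      rw [Zsqrtd.norm_def] at h <;> [left; right] <;> linarith [h]
  have hnorm : (a*a - m*(b*b))^2 = 1 := by rcases hE with h|h <;> rw [h] <;> norm_num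
  -- key algebraic identity
  have hkey : Zsqrtd.norm ((u : ℤ√m) ^ 4 - 1) = -16*m*(a*a)*(b*b) := by
    rw [show ((u:ℤ√m))^4 = (u:ℤ√m)*(u:ℤ√m)*((u:ℤ√m)*(u:ℤ√m)) by ring]
    simp only [Zsqrtd.norm_def, Zsqrtd.re_sub, Zsqrtd.im_sub, Zsqrtd.re_mul, Zsqrtd.im_mul,
      Zsqrtd.re_one, Zsqrtd.im_one]
    linear_combination ((a*a - m*(b*b))^2 - 1) * hnorm
  -- a and b are nonzero
  have ha0 : a ≠ 0 := by
    intro h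
    rw [h] at hE
    rcases hE with h'|h'
    · nlinarith [mul_self_nonneg b]
    · have hd : m ∣ 1 := ⟨b*b, by linarith⟩
      have := Int.le_of_dvd one_pos hd
      omega
  have hb0 : b ≠ 0 := by
    intro h
    rw [h] at hE
    have haa : a*a = 1 := by rcases hE with h'|h' <;> nlinarith [mul_self_nonneg a]
    rcases Int.isUnit_iff.mp (IsUnit.of_mul_eq_one (a := a) a haa) with h1|h1
    · exact hu1 (Zsqrtd.ext (by rw [← ha_def, h1, Zsqrtd.re_one])
        (by rw [← hb_def, h, Zsqrtd.im_one]))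
    · exact hu2 (Zsqrtd.ext (by rw [← ha_def, h1]; simp)
        (by rw [← hb_def, h]; simp))
  have hm0 : m ≠ 0 := by omega
  have hN0 : Zsqrtd.norm ((u : ℤ√m) ^ 4 - 1) ≠ 0 := by
    rw [hkey]
    exact mul_ne_zero (mul_ne_zero (mul_ne_zero (by norm_num) hm0)
      (mul_ne_zero ha0 ha0)) (mul_ne_zero hb0 hb0)
  refine ⟨hN0, ?_⟩
  -- valuation computation
  have hval : padicValInt 2 (Zsqrtd.norm ((u : ℤ√m) ^ 4 - 1))
      = 4 + padicValInt 2 m + 2 * padicValInt 2 a + 2 * padicValInt 2 b := by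
    rw [hkey,
      padicValInt.mul (mul_ne_zero (mul_ne_zero (by norm_num) hm0) (mul_ne_zero ha0 ha0))
        (mul_ne_zero hb0 hb0),
      padicValInt.mul (mul_ne_zero (by norm_num) hm0) (mul_ne_zero ha0 ha0),
      padicValInt.mul (by norm_num : (-16:ℤ) ≠ 0) hm0,
      padicValInt.mul ha0 ha0, padicValInt.mul hb0 hb0, pv16]
    ring
  set pa := padicValInt 2 a with hpa
  set pb := padicValInt 2 b with hpb
  set pm := padicValInt 2 m with hpm
  -- valuation of m
  have hm4 : ¬ (4:ℤ) ∣ m := by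
    intro h
    exact (by norm_num [Int.isUnit_iff] : ¬ IsUnit (2:ℤ))
      (hmsf 2 (by rwa [show (2:ℤ)*2 = 4 by norm_num]))
  have hpmlt : pm < 2 := pv_lt_of_not_dvd (by rwa [show (2:ℤ)^2 = 4 by norm_num])
  -- mod 8 information
  have hAA := sq8 a
  have hBB := sq8 b
  have hmb8 : (m*(b*b)) % 8 = (m % 8) * ((b*b) % 8) % 8 := Int.mul_emod _ _ _
  -- abstract the nonlinear atoms so `omega` can work
  have key : ∀ c : ℤ, m % 8 = c →
      ∀ A B : ℤ, A = a*a → B = b*b →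
      (A - m*B = 1 ∨ A - m*B = -1) → (m*B) % 8 = c * (B % 8) % 8 →
      True := fun _ _ _ _ _ _ _ _ => trivial
  rcases hm8 with hc|hc|hc|hc
  · -- m ≡ 2 : δ₀ = 1, pm = 1
    have hpm1 : 1 ≤ pm := pv_ge_of_dvd hm0 (by rw [pow_one]; omega)
    refine ⟨pa + pb, ?_⟩
    rw [hval, if_pos hc]
    omega
  · -- m ≡ 3 : δ₀ = 2, pm = 0, not both odd
    have hpm0 : pm = 0 := by
      have := pv_lt_of_not_dvd (a := m) (n := 1) (by rw [pow_one]; omega)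
      omega
    have hnotboth : ¬ (a % 2 = 1 ∧ b % 2 = 1) := by
      rintro ⟨hao, hbo⟩
      have h1 : a*a % 8 = 1 := by rcases hAA with ⟨_,_⟩|⟨h,_⟩|⟨_,h⟩ <;> omega
      have h2 : b*b % 8 = 1 := by rcases hBB with ⟨_,_⟩|⟨h,_⟩|⟨_,h⟩ <;> omega
      rw [h2, hc] at hmb8
      norm_num at hmb8
      generalize hA : a*a = A at hE h1
      generalize hB : m*(b*b) = B at hE hmb8
      omega
    have hab1 : 1 ≤ pa + pb := by
      rcases (by omega : a % 2 = 0 ∨ b % 2 = 0) with h|h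
      · have := pv_ge_of_dvd ha0 (n := 1) (by rw [pow_one]; omega); omega
      · have := pv_ge_of_dvd hb0 (n := 1) (by rw [pow_one]; omega); omega
    refine ⟨pa + pb - 1, ?_⟩
    rw [hval, if_neg (by omega), if_pos hc]
    omega
  · -- m ≡ 6 : δ₀ = 3, pm = 1, not both odd
    have hpm1 : 1 ≤ pm := pv_ge_of_dvd hm0 (by rw [pow_one]; omega)
    have hnotboth : ¬ (a % 2 = 1 ∧ b % 2 = 1) := by
      rintro ⟨hao, hbo⟩
      have h1 : a*a % 8 = 1 := by rcases hAA with ⟨_,_⟩|⟨h,_⟩|⟨_,h⟩ <;> omega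
      have h2 : b*b % 8 = 1 := by rcases hBB with ⟨_,_⟩|⟨h,_⟩|⟨_,h⟩ <;> omega
      rw [h2, hc] at hmb8
      norm_num at hmb8
      generalize hA : a*a = A at hE h1
      generalize hB : m*(b*b) = B at hE hmb8
      omega
    have hab1 : 1 ≤ pa + pb := by
      rcases (by omega : a % 2 = 0 ∨ b % 2 = 0) with h|h
      · have := pv_ge_of_dvd ha0 (n := 1) (by rw [pow_one]; omega); omega
      · have := pv_ge_of_dvd hb0 (n := 1) (by rw [pow_one]; omega); omega
    refine ⟨pa + pb - 1, ?_⟩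
    rw [hval, if_neg (by omega), if_neg (by omega), if_pos hc]
    omega
  · -- m ≡ 7 : δ₀ = 4, pm = 0, pa + pb ≥ 2
    have hpm0 : pm = 0 := by
      have := pv_lt_of_not_dvd (a := m) (n := 1) (by rw [pow_one]; omega)
      omega
    have hab2 : 2 ≤ pa + pb := by
      have hcases : ((4:ℤ) ∣ a) ∨ ((4:ℤ) ∣ b) ∨ (a % 2 = 0 ∧ b % 2 = 0) := by
        rw [hc] at hmb8
        rcases hBB with ⟨h4b,h2⟩|⟨hbe,h4b,h2⟩|⟨hbo,h2⟩ <;> rw [h2] at hmb8 <;>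
          norm_num at hmb8 <;>
          rcases hAA with ⟨h4a,h1⟩|⟨hae,h4a,h1⟩|⟨hao,h1⟩ <;>
          [skip; skip; skip; skip; skip; skip; skip; skip; skip] <;>
          first
          | (left; exact h4a)
          | (right; left; exact h4b)
          | (right; right; exact ⟨hae, hbe⟩)
          | (exfalso
             generalize hA : a*a = A at hE h1
             generalize hB : m*(b*b) = B at hE hmb8
             omega)
      rcases hcases with h|h|⟨h1,h2⟩
      · have := pv_ge_of_dvd ha0 (n := 2) (by rw [show (2:ℤ)^2 = 4 by norm_num]; exact h)
        omega
      · have := pv_ge_of_dvd hb0 (n := 2) (by rw [show (2:ℤ)^2 = 4 by norm_num]; exact h)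
        omega
      · have t1 := pv_ge_of_dvd ha0 (n := 1) (by rw [pow_one]; omega)
        have t2 := pv_ge_of_dvd hb0 (n := 1) (by rw [pow_one]; omega)
        omega
    refine ⟨pa + pb - 2, ?_⟩
    rw [hval, if_neg (by omega), if_neg (by omega), if_neg (by omega)]
    omega
end
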